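/- Substituting z = -α⁴ with α > 0, the fourth-order polynomial P(ξ) = (ξ - 1)⁴ + 4α⁴ ξ² has exactly two roots inside the open unit disk, namely ξ₀ = (1 - α/A) + i(Aα - α²) and its complex conjugate, where A = √((√(4 + α⁴) + α²)/2). -/

import Mathlib

open Real Complex

private lemma aux_recip (a b : ℝ) (h : a * b = 1) (h0 : 0 < a) (h1 : a < 1) : 1 < b := by
  nlinarith

theorem roots_in_unit_disk (α : ℝ) (hα : 0 < α)
    (A : ℝ) (hA : A = Real.sqrt ((Real.sqrt (4 + α ^ 4) + α ^ 2) / 2))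
    (ξ₀ : ℂ) (hξ₀ : ξ₀ = ((1 - α / A : ℝ) : ℂ) + ((A * α - α ^ 2 : ℝ) : ℂ) * Complex.I)
    (P : ℂ → ℂ) (hP : P = fun ξ => (ξ - 1) ^ 4 + 4 * (α : ℂ) ^ 4 * ξ ^ 2) :
    P ξ₀ = 0 ∧ P (starRingEnd ℂ ξ₀) = 0 ∧ ‖ξ₀‖ < 1 ∧
    ∀ ξ : ℂ, P ξ = 0 → ξ ≠ ξ₀ → ξ ≠ starRingEnd ℂ ξ₀ → 1 < ‖ξ‖ := by
  have hs : Real.sqrt (4 + α ^ 4) ^ 2 = 4 + α ^ 4 := Real.sq_sqrt (by positivity)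
  have hsnn : 0 ≤ Real.sqrt (4 + α ^ 4) := Real.sqrt_nonneg _
  have hA2 : A ^ 2 = (Real.sqrt (4 + α ^ 4) + α ^ 2) / 2 := by
    rw [hA]; exact Real.sq_sqrt (by positivity)
  have hApos : 0 < A := by
    have h2 : (2:ℝ) ≤ Real.sqrt (4 + α ^ 4) := by
      nlinarith [hs, hsnn, pow_pos hα 4]
    nlinarith [hA ▸ Real.sqrt_nonneg ((Real.sqrt (4 + α ^ 4) + α ^ 2) / 2)]
  have hA0 : A ≠ 0 := ne_of_gt hApos
  have hrel : A ^ 4 = α ^ 2 * A ^ 2 + 1 := by nlinarith [hA2, hs]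
  have hsq : α ^ 2 < A ^ 2 := by nlinarith [hrel, mul_pos hApos hApos]
  have hAα : α < A := lt_of_pow_lt_pow_left₀ 2 hApos.le hsq
  -- abs ξ₀
  have habs2 : (‖ξ₀‖) ^ 2 = (A ^ 2 - α * A) ^ 2 := by
    rw [Complex.sq_norm, hξ₀, Complex.normSq_add_mul_I]
    field_simp
    nlinarith [hrel, sq_nonneg (A - α)]
  have hd0 : 0 < A ^ 2 - α * A := by nlinarith
  have hd1 : A ^ 2 - α * A < 1 := by nlinarith [hrel, mul_pos hα hApos]
  have habs : ‖ξ₀‖ = A ^ 2 - α * A := by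
    nlinarith [habs2, norm_nonneg ξ₀, hd0]
  -- complex algebra
  set c : ℂ := (α : ℂ) with hc
  set B : ℂ := (A : ℂ) with hB
  have hBrel : B ^ 4 = c ^ 2 * B ^ 2 + 1 := by
    rw [hc, hB]; exact_mod_cast congrArg (Complex.ofReal) hrel
  have hx : (α / A : ℝ) = α * A ^ 3 - α ^ 3 * A := by
    field_simp
    linear_combination (-1) * hrel
  have hξ₀' : ξ₀ = (1 - c * B ^ 3 + c ^ 3 * B) + (B * c - c ^ 2) * Complex.I := by
    rw [hξ₀, hx, hc, hB]; push_cast; ring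
  set η : ℂ := (starRingEnd ℂ) ξ₀ with hηdef
  have hη : η = (1 - c * B ^ 3 + c ^ 3 * B) - (B * c - c ^ 2) * Complex.I := by
    rw [hηdef, hξ₀']
    simp [hc, hB, map_sub, map_add, map_mul, map_pow, Complex.conj_I, Complex.conj_ofReal]
    ring
  have hq1 : ξ₀ ^ 2 - (2 - 2 * c ^ 2 * Complex.I) * ξ₀ + 1 = 0 := by
    rw [hξ₀']
    linear_combination (c^2*(B^2 - c^2)) * Complex.I_sq
      + (c^2*(B^2 - c^2 - 2*Complex.I)) * hBrel
  have hq2 : η ^ 2 - (2 + 2 * c ^ 2 * Complex.I) * η + 1 = 0 := by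
    rw [hη]
    linear_combination (c^2*(B^2 - c^2)) * Complex.I_sq
      + (c^2*(B^2 - c^2 + 2*Complex.I)) * hBrel
  set r1 : ℂ := (2 - 2 * c ^ 2 * Complex.I) - ξ₀ with hr1
  set r2 : ℂ := (2 + 2 * c ^ 2 * Complex.I) - η with hr2
  have hfac : ∀ ξ : ℂ, P ξ = (ξ - ξ₀) * (ξ - r1) * ((ξ - η) * (ξ - r2)) := by
    intro ξ
    rw [hP]
    simp only [hr1, hr2]
    linear_combination (4*c^4*ξ^2) * Complex.I_sq
      + (ξ^2 - (2 + 2*c^2*Complex.I)*ξ + 1) * hq1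
      + ((ξ - ξ₀) * (ξ - ((2 - 2*c^2*Complex.I) - ξ₀))) * hq2
  have hP0 : P ξ₀ = 0 := by rw [hfac ξ₀]; ring
  have hPη : P η = 0 := by rw [hfac η]; ring
  have habslt : ‖ξ₀‖ < 1 := by rw [habs]; exact hd1
  refine ⟨hP0, hPη, habslt, ?_⟩
  intro ξ hPξ h1 h2
  have hprod : (ξ - ξ₀) * (ξ - r1) * ((ξ - η) * (ξ - r2)) = 0 := by
    rw [← hfac ξ, hPξ]
  have habspos : 0 < ‖ξ₀‖ := by rw [habs]; exact hd0
  rcases mul_eq_zero.1 hprod with h | h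
  · rcases mul_eq_zero.1 h with h' | h'
    · exact absurd (sub_eq_zero.1 h') h1
    · -- ξ = r1, and ξ₀ * r1 = 1
      have hξeq : ξ = r1 := sub_eq_zero.1 h'
      have hmul : ξ₀ * r1 = 1 := by rw [hr1]; linear_combination (-1 : ℂ) * hq1
      have : ‖ξ₀‖ * ‖r1‖ = 1 := by
        rw [← norm_mul, hmul, norm_one]
      rw [hξeq]
      exact aux_recip _ _ this habspos habslt
  · rcases mul_eq_zero.1 h with h' | h'
    · exact absurd (sub_eq_zero.1 h') h2
    · have hξeq : ξ = r2 := sub_eq_zero.1 h'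
      have hmul : η * r2 = 1 := by rw [hr2]; linear_combination (-1 : ℂ) * hq2
      have habsη : ‖η‖ = ‖ξ₀‖ := by
        rw [hηdef]; exact Complex.norm_conj ξ₀
      have : ‖ξ₀‖ * ‖r2‖ = 1 := by
        rw [← habsη, ← norm_mul, hmul, norm_one]
      rw [hξeq]
      exact aux_recip _ _ this habspos habslt
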